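/- If g is not structurally utilitarian, then there exist types φ₁ < φ₂ in (φ̲,φ̄) and a three times continuously differentiable tax policy T ∈ 𝒯̂ that is strictly increasing and strictly convex on [z_{φ̲}, z̄] such that either ∂ĝ_φ/∂z(U_φ(T), z_φ(T)) < 0 for all φ ∈ (φ₁,φ₂), or ∂ĝ_φ/∂z(U_φ(T), z_φ(T)) > 0 for all φ ∈ (φ₁,φ₂). -/

import Mathlib

open Set MeasureTheory Filter Topology

noncomputable section

namespace Stmt8

/-- Membership in `𝒮`. -/
def MemS (zbar zlo : ℝ) (T : ℝ → ℝ) : Prop :=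
  ContDiff ℝ 3 T ∧ (∀ z ∈ Icc (0:ℝ) zlo, deriv T z = 0) ∧
  ∀ z ∈ Icc zlo zbar, deriv T z ∈ Icc (0:ℝ) 1

/-- `g` is structurally utilitarian. -/
def StructUtil (philo phihi : ℝ) (v : ℝ → ℝ → ℝ) (zstar : ℝ → ℝ)
    (g : ℝ → ℝ → ℝ → ℝ) : Prop :=
  ∀ φ ∈ Icc philo phihi, ∀ z0 ∈ Icc (zstar philo) (zstar φ), ∀ z1 ∈ Icc (zstar philo) (zstar φ),
    ∀ c0 c1 : ℝ, c0 - v z0 φ = c1 - v z1 φ → g c0 z0 φ = g c1 z1 φ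

/-- `U_φ(T)`: type `φ`'s indirect utility in consumption units. -/
def Uphi (v : ℝ → ℝ → ℝ) (zopt : (ℝ → ℝ) → ℝ → ℝ) (T : ℝ → ℝ) (φ : ℝ) : ℝ :=
  zopt T φ - T (zopt T φ) - v (zopt T φ) φ

lemma deriv_fixRight (V : ℝ × ℝ → ℝ) (z φ : ℝ) (hV : DifferentiableAt ℝ V (z, φ)) :
    deriv (fun w => V (w, φ)) z = fderiv ℝ V (z, φ) (1, 0) := by
  have hι : HasDerivAt (fun w : ℝ => ((w, φ) : ℝ × ℝ)) ((1:ℝ), (0:ℝ)) z :=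
    (hasDerivAt_id z).prodMk (hasDerivAt_const z φ)
  exact (hV.hasFDerivAt.comp_hasDerivAt z hι).deriv

lemma deriv_fixMid (G : ℝ × ℝ × ℝ → ℝ) (u z φ : ℝ) (hG : DifferentiableAt ℝ G (u, z, φ)) :
    deriv (fun w => G (u, w, φ)) z = fderiv ℝ G (u, z, φ) (0, 1, 0) := by
  have hι : HasDerivAt (fun w : ℝ => ((u, w, φ) : ℝ × ℝ × ℝ)) ((0:ℝ), (1:ℝ), (0:ℝ)) z :=
    (hasDerivAt_const z u).prodMk ((hasDerivAt_id z).prodMk (hasDerivAt_const z φ))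
  exact (hG.hasFDerivAt.comp_hasDerivAt z hι).deriv

lemma expNegInvGlue_mono : Monotone expNegInvGlue := by
  intro x y hxy
  rcases le_or_gt x 0 with hx | hx
  · rw [expNegInvGlue.zero_of_nonpos hx]; exact expNegInvGlue.nonneg y
  · have hy : 0 < y := lt_of_lt_of_le hx hxy
    rw [show expNegInvGlue x = Real.exp (-x⁻¹) from if_neg (not_le.2 hx),
        show expNegInvGlue y = Real.exp (-y⁻¹) from if_neg (not_le.2 hy)]
    exact Real.exp_le_exp.mpr (by gcongr)

lemma expNegInvGlue_strictMonoOn : StrictMonoOn expNegInvGlue (Ici 0) := by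
  intro x hx y _ hxy
  rcases eq_or_lt_of_le (mem_Ici.mp hx) with hx0 | hx0
  · rw [← hx0, expNegInvGlue.zero]
    exact expNegInvGlue.pos_of_pos (hx0 ▸ hxy)
  · have hy : 0 < y := hx0.trans hxy
    rw [show expNegInvGlue x = Real.exp (-x⁻¹) from if_neg (not_le.2 hx0),
        show expNegInvGlue y = Real.exp (-y⁻¹) from if_neg (not_le.2 hy)]
    exact Real.exp_lt_exp.mpr (by gcongr)

set_option maxHeartbeats 1000000 in
/-- **Corollary (Sher 2021, Corollary `convex tax policy corollary`).**  If `g` is not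
structurally utilitarian, there are types `φ₁ < φ₂` and a C³ tax policy `T ∈ 𝒯̂`,
strictly increasing and strictly convex on `[z_{φ̲}, z̄]`, such that
`∂ĝ_φ/∂z(U_φ(T), z_φ(T))` is either negative for all `φ ∈ (φ₁,φ₂)` or positive for all
`φ ∈ (φ₁,φ₂)`, where `ĝ_φ(u,z) = g_φ(u + v_φ(z), z)`. -/
theorem stmt8 (philo phihi : ℝ) (hphi : philo < phihi)
    (zbar : ℝ) (hzbar : 0 < zbar)
    (v : ℝ → ℝ → ℝ)
    (hv_smooth : ContDiff ℝ 3 (fun p : ℝ × ℝ => v p.1 p.2))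
    (hv_i : ∀ z ∈ Icc (0:ℝ) zbar, ∀ φ ∈ Icc philo phihi, 0 < deriv (fun w => v w φ) z)
    (hv_ii : ∀ z ∈ Icc (0:ℝ) zbar, ∀ φ ∈ Icc philo phihi,
      deriv (fun p => deriv (fun w => v w p) z) φ < 0)
    (hv_iii : ∀ z ∈ Icc (0:ℝ) zbar, ∀ φ ∈ Icc philo phihi,
      0 < deriv (deriv (fun w => v w φ)) z)
    (hv_iv : deriv (fun w => v w philo) 0 < 1)
    (hv_v : 1 < deriv (fun w => v w phihi) zbar)
    (zstar : ℝ → ℝ)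
    (hzstar : ∀ φ ∈ Icc philo phihi, zstar φ ∈ Icc (0:ℝ) zbar ∧
      deriv (fun w => v w φ) (zstar φ) = 1)
    (TT : Set (ℝ → ℝ))
    (hTT_sub : ∀ T ∈ TT, MemS zbar (zstar philo) T)
    (hTT_conv : ∀ T, MemS zbar (zstar philo) T →
      ConvexOn ℝ (Icc (zstar philo) zbar) T → T ∈ TT)
    (zopt : (ℝ → ℝ) → ℝ → ℝ)
    (hzopt : ∀ T ∈ TT, ∀ φ ∈ Icc philo phihi,
      zopt T φ ∈ Icc (0:ℝ) zbar ∧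
      IsMaxOn (fun z => z - T z - v z φ) (Icc (0:ℝ) zbar) (zopt T φ) ∧
      ∀ z ∈ Icc (0:ℝ) zbar,
        IsMaxOn (fun w => w - T w - v w φ) (Icc (0:ℝ) zbar) z → z = zopt T φ)
    (g : ℝ → ℝ → ℝ → ℝ)
    (hg_smooth : ContDiff ℝ 3 (fun p : ℝ × ℝ × ℝ => g p.1 p.2.1 p.2.2))
    (hg_pos : ∀ c z φ, 0 < g c z φ)
    (hnsu : ¬ StructUtil philo phihi v zstar g) :
    ∃ φ₁ φ₂, philo < φ₁ ∧ φ₁ < φ₂ ∧ φ₂ < phihi ∧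
      ∃ T ∈ TT, ContDiff ℝ 3 T ∧ StrictMonoOn T (Icc (zstar philo) zbar) ∧
        StrictConvexOn ℝ (Icc (zstar philo) zbar) T ∧
        ((∀ φ ∈ Ioo φ₁ φ₂,
            deriv (fun w => g (Uphi v zopt T φ + v w φ) w φ) (zopt T φ) < 0) ∨
         (∀ φ ∈ Ioo φ₁ φ₂,
            0 < deriv (fun w => g (Uphi v zopt T φ + v w φ) w φ) (zopt T φ))) := by
  have hφlo : philo ∈ Icc philo phihi := left_mem_Icc.2 hphi.le
  obtain ⟨hamem, hvza⟩ := hzstar philo hφlo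
  set a := zstar philo with ha
  -- basic facts about slices of v
  have hvφ : ∀ φ : ℝ, ContDiff ℝ 3 (fun w => v w φ) := fun φ =>
    hv_smooth.comp (contDiff_id.prodMk contDiff_const)
  have hvφd : ∀ φ : ℝ, Differentiable ℝ (fun w => v w φ) := fun φ =>
    (hvφ φ).differentiable (by norm_num)
  have hvz_cd : ∀ φ : ℝ, ContDiff ℝ 2 (deriv (fun w => v w φ)) := by
    intro φ
    have h3 := hvφ φ
    rw [show (3 : WithTop ℕ∞) = 2 + 1 from by norm_num, contDiff_succ_iff_deriv] at h3
    exact h3.2.2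
  have hvz_mono : ∀ φ ∈ Icc philo phihi,
      StrictMonoOn (deriv (fun w => v w φ)) (Icc 0 zbar) := by
    intro φ hφ
    refine strictMonoOn_of_deriv_pos (convex_Icc _ _) ((hvz_cd φ).continuous.continuousOn) ?_
    intro z hz
    rw [interior_Icc] at hz
    exact hv_iii z (Ioo_subset_Icc_self hz) φ hφ
  -- extract the counterexample to structural utilitarianism
  unfold StructUtil at hnsu
  push_neg at hnsu
  obtain ⟨φ0, hφ0, w0, hw0, w1, hw1, c0, c1, hcc, hgne⟩ := hnsu
  set u := c0 - v w0 φ0 with hu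
  obtain ⟨zlo, zhi, hlt, hzloIcc, hzhiIcc, hfnelh⟩ :
      ∃ zlo zhi, zlo < zhi ∧ zlo ∈ Icc a (zstar φ0) ∧ zhi ∈ Icc a (zstar φ0)
        ∧ g (u + v zlo φ0) zlo φ0 ≠ g (u + v zhi φ0) zhi φ0 := by
    have hc0 : u + v w0 φ0 = c0 := by rw [hu]; ring
    have hc1 : u + v w1 φ0 = c1 := by rw [hu]; linarith [hcc]
    rcases lt_trichotomy w0 w1 with hlt | heq | hgt
    · exact ⟨w0, w1, hlt, hw0, hw1, by rw [hc0, hc1]; exact hgne⟩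
    · exfalso
      apply hgne
      rw [heq] at hc0
      have hcc' : c0 = c1 := by linarith
      rw [heq, hcc']
    · exact ⟨w1, w0, hgt, hw1, hw0, by rw [hc0, hc1]; exact fun hq => hgne hq.symm⟩
  -- smoothness of the composite Ψ
  have hΨcd : ContDiff ℝ 3 (fun p : ℝ × ℝ × ℝ => g (p.1 + v p.2.1 p.2.2) p.2.1 p.2.2) := by
    have hinner : ContDiff ℝ 3 (fun p : ℝ × ℝ × ℝ =>
        ((p.1 + v p.2.1 p.2.2, p.2.1, p.2.2) : ℝ × ℝ × ℝ)) := by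
      refine ContDiff.prodMk ?_ (ContDiff.prodMk ?_ ?_)
      · exact contDiff_fst.add (hv_smooth.comp
          ((contDiff_fst.comp contDiff_snd).prodMk (contDiff_snd.comp contDiff_snd)))
      · exact contDiff_fst.comp contDiff_snd
      · exact contDiff_snd.comp contDiff_snd
    exact hg_smooth.comp hinner
  have hΨd : Differentiable ℝ (fun p : ℝ × ℝ × ℝ => g (p.1 + v p.2.1 p.2.2) p.2.1 p.2.2) :=
    hΨcd.differentiable (by norm_num)
  -- mean value theorem: a point zs with nonzero derivative of ĝ
  have hfcd : ContDiff ℝ 3 (fun z => g (u + v z φ0) z φ0) :=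
    hΨcd.comp (contDiff_const.prodMk (contDiff_id.prodMk contDiff_const))
  have hfd : Differentiable ℝ (fun z => g (u + v z φ0) z φ0) := hfcd.differentiable (by norm_num)
  obtain ⟨zs, hzsmem, hzslope⟩ := exists_hasDerivAt_eq_slope (fun z => g (u + v z φ0) z φ0)
    (deriv (fun z => g (u + v z φ0) z φ0)) hlt hfd.continuous.continuousOn
    (fun x _ => (hfd x).hasDerivAt)
  have hderiv_ne : deriv (fun z => g (u + v z φ0) z φ0) zs ≠ 0 := by
    rw [hzslope]
    exact div_ne_zero (sub_ne_zero.2 (Ne.symm hfnelh)) (sub_ne_zero.2 hlt.ne')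
  -- location of zs
  have ha0 : 0 ≤ a := hamem.1
  have hazs : a < zs := lt_of_le_of_lt hzloIcc.1 hzsmem.1
  have hzs0 : 0 < zs := lt_of_le_of_lt ha0 hazs
  have hzsstar : zs < zstar φ0 := lt_of_lt_of_le hzsmem.2 hzhiIcc.2
  have hstarIcc : zstar φ0 ∈ Icc (0:ℝ) zbar := (hzstar φ0 hφ0).1
  have hzsbar : zs < zbar := lt_of_lt_of_le hzsstar hstarIcc.2
  have hzsIcc : zs ∈ Icc (0:ℝ) zbar := ⟨hzs0.le, hzsbar.le⟩
  -- the marginal tax rate at zs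
  set tstar := 1 - deriv (fun w => v w φ0) zs with htstar
  have hts1 : 0 < deriv (fun w => v w φ0) zs := hv_i zs hzsIcc φ0 hφ0
  have hts2 : deriv (fun w => v w φ0) zs < 1 := by
    have h1 := hvz_mono φ0 hφ0 hzsIcc hstarIcc hzsstar
    rw [(hzstar φ0 hφ0).2] at h1
    exact h1
  have htpos : 0 < tstar := by rw [htstar]; linarith
  have htlt : tstar < 1 := by rw [htstar]; linarith
  -- the building blocks of the tax policy
  set G := fun z : ℝ => expNegInvGlue (z - a) with hG
  have hGnn : ∀ z, 0 ≤ G z := fun z => expNegInvGlue.nonneg _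
  have hGzs : 0 < G zs := expNegInvGlue.pos_of_pos (by linarith)
  set c := G zs * (1 - tstar) / tstar with hcdef
  have hcpos : 0 < c := by
    rw [hcdef]; exact div_pos (mul_pos hGzs (by linarith)) htpos
  set h := fun z : ℝ => G z / (G z + c) with hh
  have hden : ∀ z, 0 < G z + c := fun z => add_pos_of_nonneg_of_pos (hGnn z) hcpos
  have hh0 : ∀ z, 0 ≤ h z := fun z => div_nonneg (hGnn z) (hden z).le
  have hh1 : ∀ z, h z < 1 := fun z => (div_lt_one (hden z)).2 (lt_add_of_pos_right _ hcpos)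
  have hGmono : Monotone G := by
    intro x y hxy
    exact expNegInvGlue_mono (by linarith : x - a ≤ y - a)
  have hGsm : StrictMonoOn G (Ici a) := by
    intro x hx y hy hxy
    exact expNegInvGlue_strictMonoOn (mem_Ici.2 (by simpa using mem_Ici.1 hx))
      (mem_Ici.2 (by simpa using mem_Ici.1 hy)) (by linarith)
  have hhmono : Monotone h := by
    intro x y hxy
    have hg := hGmono hxy
    rw [hh]
    rw [div_le_div_iff₀ (hden x) (hden y)]
    nlinarith [hcpos]
  have hhsm : StrictMonoOn h (Ici a) := by
    intro x hx y hy hxy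
    have hg := hGsm hx hy hxy
    simp only [hh]
    rw [div_lt_div_iff₀ (hden x) (hden y)]
    nlinarith [hcpos]
  have hhz : ∀ z ≤ a, h z = 0 := by
    intro z hz
    simp only [hh, hG]
    rw [expNegInvGlue.zero_of_nonpos (by linarith : z - a ≤ 0)]
    simp
  have hhpos : ∀ z, a < z → 0 < h z := by
    intro z hz
    refine div_pos ?_ (hden z)
    simp only [hG]
    exact expNegInvGlue.pos_of_pos (by linarith)
  have hhzs : h zs = tstar := by
    simp only [hh, hcdef]
    rw [div_eq_iff (hden zs).ne']
    simp only [hcdef]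
    field_simp
    ring
  -- smoothness of h
  have hG_cd : ContDiff ℝ 2 G := by
    rw [hG]
    exact expNegInvGlue.contDiff.comp (contDiff_id.sub contDiff_const)
  have hh_cd : ContDiff ℝ 2 h := by
    rw [hh]
    exact hG_cd.div (hG_cd.add contDiff_const) (fun z => (hden z).ne')
  have hh_cont : Continuous h := hh_cd.continuous
  -- the tax policy
  set κ := zs - (∫ t in (0:ℝ)..zs, h t) - v zs φ0 - u with hκ
  set T := fun z : ℝ => κ + ∫ t in (0:ℝ)..z, h t with hT
  have hT_hasD : ∀ z, HasDerivAt T (h z) z := by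
    intro z
    rw [hT]
    exact ((hh_cont.integral_hasStrictDerivAt 0 z).hasDerivAt).const_add κ
  have hT_diff : Differentiable ℝ T := fun z => (hT_hasD z).differentiableAt
  have hT_deriv : ∀ z, deriv T z = h z := fun z => (hT_hasD z).deriv
  have hT_cd : ContDiff ℝ 3 T := by
    rw [show (3 : WithTop ℕ∞) = 2 + 1 from by norm_num, contDiff_succ_iff_deriv]
    refine ⟨hT_diff, by simp, ?_⟩
    rw [funext hT_deriv]
    exact hh_cd
  have hT_memS : MemS zbar a T := by
    refine ⟨hT_cd, ?_, ?_⟩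
    · intro z hz; rw [hT_deriv]; exact hhz z hz.2
    · intro z hz; rw [hT_deriv]; exact ⟨hh0 z, (hh1 z).le⟩
  have hT_conv : ConvexOn ℝ (Icc a zbar) T := by
    refine MonotoneOn.convexOn_of_deriv (convex_Icc _ _) hT_diff.continuous.continuousOn
      hT_diff.differentiableOn ?_
    intro x _ y _ hxy
    rw [hT_deriv, hT_deriv]
    exact hhmono hxy
  have hT_mem : T ∈ TT := hTT_conv T hT_memS hT_conv
  have hT_smono : StrictMonoOn T (Icc a zbar) := by
    refine strictMonoOn_of_deriv_pos (convex_Icc _ _) hT_diff.continuous.continuousOn ?_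
    intro x hx
    rw [interior_Icc] at hx
    rw [hT_deriv]
    exact hhpos x hx.1
  have hT_sconv : StrictConvexOn ℝ (Icc a zbar) T := by
    refine StrictMonoOn.strictConvexOn_of_deriv (convex_Icc _ _)
      hT_diff.continuous.continuousOn ?_
    rw [interior_Icc]
    intro x hx y hy hxy
    rw [hT_deriv, hT_deriv]
    exact hhsm (mem_Ici.2 hx.1.le) (mem_Ici.2 hy.1.le) hxy
  -- characterization of the optimal income
  have key : ∀ φ ∈ Icc philo phihi, ∀ r ∈ Ioo (0:ℝ) zbar,
      1 - h r - deriv (fun w => v w φ) r = 0 → zopt T φ = r := by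
    intro φ hφ r hr hroot
    have hΦd : ∀ z : ℝ, HasDerivAt (fun z => z - T z - v z φ)
        (1 - h z - deriv (fun w => v w φ) z) z := fun z =>
      ((hasDerivAt_id z).sub (hT_hasD z)).sub ((hvφd φ z).hasDerivAt)
    have hψlt : ∀ z ∈ Icc (0:ℝ) zbar, z < r → 0 < 1 - h z - deriv (fun w => v w φ) z := by
      intro z hz hzr
      have h1 : h z ≤ h r := hhmono hzr.le
      have h2 : deriv (fun w => v w φ) z < deriv (fun w => v w φ) r :=
        hvz_mono φ hφ hz ⟨hr.1.le, hr.2.le⟩ hzr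
      linarith
    have hψgt : ∀ z ∈ Icc (0:ℝ) zbar, r < z → 1 - h z - deriv (fun w => v w φ) z < 0 := by
      intro z hz hzr
      have h1 : h r ≤ h z := hhmono hzr.le
      have h2 : deriv (fun w => v w φ) r < deriv (fun w => v w φ) z :=
        hvz_mono φ hφ ⟨hr.1.le, hr.2.le⟩ hz hzr
      linarith
    have hc1 : Continuous (fun z : ℝ => z - T z - v z φ) :=
      (continuous_id.sub hT_diff.continuous).sub (hvφd φ).continuous
    have hmono : MonotoneOn (fun z : ℝ => z - T z - v z φ) (Icc 0 r) := by
      refine monotoneOn_of_deriv_nonneg (convex_Icc _ _) hc1.continuousOn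
        (fun z _ => ((hΦd z).differentiableAt).differentiableWithinAt) ?_
      intro z hz
      rw [interior_Icc] at hz
      rw [(hΦd z).deriv]
      exact (hψlt z ⟨hz.1.le, le_trans hz.2.le hr.2.le⟩ hz.2).le
    have hanti : AntitoneOn (fun z : ℝ => z - T z - v z φ) (Icc r zbar) := by
      refine antitoneOn_of_deriv_nonpos (convex_Icc _ _) hc1.continuousOn
        (fun z _ => ((hΦd z).differentiableAt).differentiableWithinAt) ?_
      intro z hz
      rw [interior_Icc] at hz
      rw [(hΦd z).deriv]
      exact (hψgt z ⟨le_trans hr.1.le hz.1.le, hz.2.le⟩ hz.1).le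
    have hmax : IsMaxOn (fun z : ℝ => z - T z - v z φ) (Icc 0 zbar) r := by
      refine isMaxOn_iff.mpr ?_
      intro y hy
      rcases le_total y r with hyr | hry
      · exact hmono ⟨hy.1, hyr⟩ ⟨hr.1.le, le_refl r⟩ hyr
      · exact hanti ⟨le_refl r, hr.2.le⟩ ⟨hry, hy.2⟩ hry
    exact ((hzopt T hT_mem φ hφ).2.2 r ⟨hr.1.le, hr.2.le⟩ hmax).symm
  -- at φ0 the optimum is zs with utility u
  have hψ0 : 1 - h zs - deriv (fun w => v w φ0) zs = 0 := by
    rw [hhzs, htstar]; ring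
  have hm0 : zopt T φ0 = zs := key φ0 hφ0 zs ⟨hzs0, hzsbar⟩ hψ0
  have hU0 : Uphi v zopt T φ0 = u := by
    simp only [Uphi, hm0]
    simp only [hT, hκ]
    ring
  -- joint continuity of the z-derivative of v
  have hVd : Differentiable ℝ (fun p : ℝ × ℝ => v p.1 p.2) := hv_smooth.differentiable (by norm_num)
  have hvzJ : Continuous (fun p : ℝ × ℝ => deriv (fun w => v w p.2) p.1) := by
    have heq : (fun p : ℝ × ℝ => deriv (fun w => v w p.2) p.1)
        = fun p : ℝ × ℝ => fderiv ℝ (fun q : ℝ × ℝ => v q.1 q.2) p (1, 0) := by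
      funext p
      exact deriv_fixRight _ p.1 p.2 (hVd p)
    rw [heq]
    exact (hv_smooth.continuous_fderiv_apply (by norm_num)).comp
      (continuous_id.prodMk continuous_const)
  have hψJ : Continuous (fun p : ℝ × ℝ => 1 - h p.1 - deriv (fun w => v w p.2) p.1) :=
    (continuous_const.sub (hh_cont.comp continuous_fst)).sub hvzJ
  -- joint continuity of the z-derivative of ĝ
  have hD_eq : ∀ U z φ : ℝ, deriv (fun w => g (U + v w φ) w φ) z
      = fderiv ℝ (fun q : ℝ × ℝ × ℝ => g (q.1 + v q.2.1 q.2.2) q.2.1 q.2.2) (U, z, φ) (0, 1, 0) :=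
    fun U z φ => deriv_fixMid _ U z φ (hΨd _)
  have hD_cont : Continuous (fun p : ℝ × ℝ × ℝ =>
      fderiv ℝ (fun q : ℝ × ℝ × ℝ => g (q.1 + v q.2.1 q.2.2) q.2.1 q.2.2) p (0, 1, 0)) :=
    (hΨcd.continuous_fderiv_apply (by norm_num)).comp (continuous_id.prodMk continuous_const)
  -- continuity of the optimal income in the type
  have hmten : Tendsto (fun φ => zopt T φ) (𝓝[Icc philo phihi] φ0) (𝓝 zs) := by
    rw [Metric.tendsto_nhdsWithin_nhds]
    intro ε hε
    set ε' := min (ε / 2) (min ((zs - a) / 2) ((zbar - zs) / 2)) with hε'def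
    have hε'pos : 0 < ε' := lt_min (by linarith) (lt_min (by linarith) (by linarith))
    have hε'a : ε' ≤ (zs - a) / 2 := le_trans (min_le_right _ _) (min_le_left _ _)
    have hε'b : ε' ≤ (zbar - zs) / 2 := le_trans (min_le_right _ _) (min_le_right _ _)
    have hε'ε : ε' ≤ ε / 2 := min_le_left _ _
    have hmemlo : zs - ε' ∈ Icc (0:ℝ) zbar := ⟨by linarith, by linarith⟩
    have hmemhi : zs + ε' ∈ Icc (0:ℝ) zbar := ⟨by linarith, by linarith⟩
    have hlo0 : 0 < 1 - h (zs - ε') - deriv (fun w => v w φ0) (zs - ε') := by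
      have h1 : h (zs - ε') ≤ h zs := hhmono (by linarith)
      have h2 : deriv (fun w => v w φ0) (zs - ε') < deriv (fun w => v w φ0) zs :=
        hvz_mono φ0 hφ0 hmemlo hzsIcc (by linarith)
      linarith [hψ0]
    have hhi0 : 1 - h (zs + ε') - deriv (fun w => v w φ0) (zs + ε') < 0 := by
      have h1 : h zs ≤ h (zs + ε') := hhmono (by linarith)
      have h2 : deriv (fun w => v w φ0) zs < deriv (fun w => v w φ0) (zs + ε') :=
        hvz_mono φ0 hφ0 hzsIcc hmemhi (by linarith)
      linarith [hψ0]
    have hclo : Continuous (fun φ : ℝ => 1 - h (zs - ε') - deriv (fun w => v w φ) (zs - ε')) :=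
      hψJ.comp (continuous_const.prodMk continuous_id)
    have hchi : Continuous (fun φ : ℝ => 1 - h (zs + ε') - deriv (fun w => v w φ) (zs + ε')) :=
      hψJ.comp (continuous_const.prodMk continuous_id)
    have hev : ∀ᶠ φ in 𝓝 φ0, (0 < 1 - h (zs - ε') - deriv (fun w => v w φ) (zs - ε'))
        ∧ (1 - h (zs + ε') - deriv (fun w => v w φ) (zs + ε') < 0) :=
      ((hclo.tendsto φ0).eventually (eventually_gt_nhds hlo0)).and
        ((hchi.tendsto φ0).eventually (eventually_lt_nhds hhi0))
    obtain ⟨δ, hδpos, hδ⟩ := Metric.eventually_nhds_iff.mp hev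
    refine ⟨δ, hδpos, ?_⟩
    intro φ hφmem hdist
    obtain ⟨hp, hn⟩ := hδ hdist
    have hcont : ContinuousOn (fun z : ℝ => 1 - h z - deriv (fun w => v w φ) z)
        (Icc (zs - ε') (zs + ε')) :=
      (hψJ.comp (continuous_id.prodMk continuous_const)).continuousOn
    have hsub := intermediate_value_Icc' (by linarith : zs - ε' ≤ zs + ε') hcont
    obtain ⟨r, hrmem, hr0⟩ := hsub ⟨hn.le, hp.le⟩
    have hrIoo : r ∈ Ioo (0:ℝ) zbar := ⟨by linarith [hrmem.1], by linarith [hrmem.2]⟩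
    rw [key φ hφmem r hrIoo hr0]
    rw [Real.dist_eq]
    have h1 : |r - zs| ≤ ε' := abs_le.mpr ⟨by linarith [hrmem.1], by linarith [hrmem.2]⟩
    linarith
  -- continuity of the indirect utility in the type
  have hidt : Tendsto (fun φ : ℝ => φ) (𝓝[Icc philo phihi] φ0) (𝓝 φ0) :=
    tendsto_id.mono_left nhdsWithin_le_nhds
  have hpair : Tendsto (fun φ => (zopt T φ, φ)) (𝓝[Icc philo phihi] φ0) (𝓝 (zs, φ0)) :=
    hmten.prodMk_nhds hidt
  have hUc : Continuous (fun p : ℝ × ℝ => p.1 - T p.1 - v p.1 p.2) :=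
    (continuous_fst.sub (hT_diff.continuous.comp continuous_fst)).sub hv_smooth.continuous
  have hUten : Tendsto (fun φ => Uphi v zopt T φ) (𝓝[Icc philo phihi] φ0) (𝓝 u) := by
    have h1 := (hUc.tendsto (zs, φ0)).comp hpair
    have hval : zs - T zs - v zs φ0 = u := by rw [← hm0]; exact hU0
    rw [hval] at h1
    exact h1
  -- the composite tendsto
  have hHten : Tendsto (fun φ =>
      fderiv ℝ (fun q : ℝ × ℝ × ℝ => g (q.1 + v q.2.1 q.2.2) q.2.1 q.2.2)
        (Uphi v zopt T φ, zopt T φ, φ) (0, 1, 0)) (𝓝[Icc philo phihi] φ0)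
      (𝓝 (fderiv ℝ (fun q : ℝ × ℝ × ℝ => g (q.1 + v q.2.1 q.2.2) q.2.1 q.2.2)
        (u, zs, φ0) (0, 1, 0))) :=
    (hD_cont.tendsto _).comp (hUten.prodMk_nhds (hmten.prodMk_nhds hidt))
  have hDne : fderiv ℝ (fun q : ℝ × ℝ × ℝ => g (q.1 + v q.2.1 q.2.2) q.2.1 q.2.2)
      (u, zs, φ0) (0, 1, 0) ≠ 0 := by
    rw [← hD_eq u zs φ0]
    exact hderiv_ne
  -- conclude
  rcases hDne.lt_or_gt with hneg | hpos
  · have hev : ∀ᶠ φ in 𝓝[Icc philo phihi] φ0,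
        fderiv ℝ (fun q : ℝ × ℝ × ℝ => g (q.1 + v q.2.1 q.2.2) q.2.1 q.2.2)
          (Uphi v zopt T φ, zopt T φ, φ) (0, 1, 0) < 0 :=
      hHten.eventually (eventually_lt_nhds hneg)
    obtain ⟨δ, hδpos, hδsub⟩ := Metric.mem_nhdsWithin_iff.mp hev
    have hphiloL : philo ≤ max philo (φ0 - δ) := le_max_left _ _
    have hLδ : φ0 - δ ≤ max philo (φ0 - δ) := le_max_right _ _
    have hRphihi : min phihi (φ0 + δ) ≤ phihi := min_le_left _ _
    have hRδ : min phihi (φ0 + δ) ≤ φ0 + δ := min_le_right _ _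
    have hLR : max philo (φ0 - δ) < min phihi (φ0 + δ) := by
      apply max_lt
      · exact lt_min hphi (by linarith [hφ0.1])
      · exact lt_min (by linarith [hφ0.2]) (by linarith)
    set L := max philo (φ0 - δ) with hL
    set R := min phihi (φ0 + δ) with hR
    refine ⟨L + (R - L)/3, R - (R - L)/3, by linarith, by linarith, by linarith,
      T, hT_mem, hT_cd, hT_smono, hT_sconv, Or.inl ?_⟩
    intro φ hφm
    obtain ⟨hφ1, hφ2⟩ := hφm
    have hφIcc : φ ∈ Icc philo phihi := ⟨by linarith, by linarith⟩
    have hφball : φ ∈ Metric.ball φ0 δ := by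
      rw [Metric.mem_ball, Real.dist_eq, abs_lt]
      constructor <;> [linarith [hLδ]; linarith [hRδ]]
    have hmem := hδsub ⟨hφball, hφIcc⟩
    rw [hD_eq]
    exact hmem
  · have hev : ∀ᶠ φ in 𝓝[Icc philo phihi] φ0,
        0 < fderiv ℝ (fun q : ℝ × ℝ × ℝ => g (q.1 + v q.2.1 q.2.2) q.2.1 q.2.2)
          (Uphi v zopt T φ, zopt T φ, φ) (0, 1, 0) :=
      hHten.eventually (eventually_gt_nhds hpos)
    obtain ⟨δ, hδpos, hδsub⟩ := Metric.mem_nhdsWithin_iff.mp hev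
    have hphiloL : philo ≤ max philo (φ0 - δ) := le_max_left _ _
    have hLδ : φ0 - δ ≤ max philo (φ0 - δ) := le_max_right _ _
    have hRphihi : min phihi (φ0 + δ) ≤ phihi := min_le_left _ _
    have hRδ : min phihi (φ0 + δ) ≤ φ0 + δ := min_le_right _ _
    have hLR : max philo (φ0 - δ) < min phihi (φ0 + δ) := by
      apply max_lt
      · exact lt_min hphi (by linarith [hφ0.1])
      · exact lt_min (by linarith [hφ0.2]) (by linarith)
    set L := max philo (φ0 - δ) with hL
    set R := min phihi (φ0 + δ) with hR
    refine ⟨L + (R - L)/3, R - (R - L)/3, by linarith, by linarith, by linarith,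
      T, hT_mem, hT_cd, hT_smono, hT_sconv, Or.inr ?_⟩
    intro φ hφm
    obtain ⟨hφ1, hφ2⟩ := hφm
    have hφIcc : φ ∈ Icc philo phihi := ⟨by linarith, by linarith⟩
    have hφball : φ ∈ Metric.ball φ0 δ := by
      rw [Metric.mem_ball, Real.dist_eq, abs_lt]
      constructor <;> [linarith [hLδ]; linarith [hRδ]]
    have hmem := hδsub ⟨hφball, hφIcc⟩
    rw [hD_eq]
    exact hmem

end Stmt8
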